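/- Let Q ∈ ℤ[x] be a monic polynomial of degree t that is irreducible over ℚ, let e ≥ 1, and set n = t·e. Then there exists a positive integer N such that for every prime l > N, every n×n matrix A over the l-adic integers ℤ_l whose characteristic polynomial is Q^e and which satisfies Q(A) = 0 is conjugate by an element of GL_n(ℤ_l) to the block-diagonal matrix consisting of e copies of the companion matrix of Q. -/

import Mathlib

open Polynomial

namespace ConjCompanionAux

variable {k : Type*} [Field k]

/-- A monic polynomial all of whose irreducible divisors divide a fixed monic
irreducible `q` is a power of `q`. -/
lemma eq_pow_of_irred_divisors (q : k[X]) (hq : Irreducible q) (hqm : q.Monic) :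
    ∀ (n : ℕ) (c : k[X]), c.natDegree = n → c.Monic →
      (∀ p : k[X], Irreducible p → p ∣ c → p ∣ q) → ∃ a : ℕ, c = q ^ a := by
  intro n
  induction n using Nat.strong_induction_on with
  | _ n ih =>
    intro c hcd hcm hdiv
    rcases Nat.eq_zero_or_pos n with h0 | hpos
    · exact ⟨0, by rw [pow_zero]; exact hcm.natDegree_eq_zero.mp (by omega)⟩
    · have hcu : ¬ IsUnit c := not_isUnit_of_natDegree_pos c (by omega)
      obtain ⟨p, hp, hpc⟩ := WfDvdMonoid.exists_irreducible_factor hcu hcm.ne_zero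
      have hq_dvd : q ∣ c := ((hp.associated_of_dvd hq (hdiv p hp hpc)).symm.dvd).trans hpc
      obtain ⟨d, hd⟩ := hq_dvd
      have hdm : d.Monic := hqm.of_mul_monic_left (hd ▸ hcm)
      have hqpos : 0 < q.natDegree := hq.natDegree_pos
      have hdeg : q.natDegree + d.natDegree = n := by
        rw [← hcd, hd, natDegree_mul hqm.ne_zero hdm.ne_zero]
      obtain ⟨a, ha⟩ := ih d.natDegree (by omega) d rfl hdm
        (fun p hp hpd => hdiv p hp (hpd.trans ⟨q, by rw [hd, mul_comm]⟩))
      exact ⟨a + 1, by rw [hd, ha, pow_succ']⟩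

lemma eval_charpoly' {R : Type*} [CommRing R] {n : Type*} [Fintype n] [DecidableEq n]
    (A : Matrix n n R) (r : R) :
    A.charpoly.eval r = (r • (1 : Matrix n n R) - A).det := by
  rw [Matrix.charpoly, _root_.eval_det, Matrix.matPolyEquiv_charmatrix]
  congr 1
  rw [eval_sub, eval_X, eval_C]
  congr 1
  ext i j
  simp [Matrix.scalar_apply, Matrix.diagonal, Matrix.one_apply, mul_ite]

lemma sum_mulVec {R m n : Type*} [NonAssocSemiring R] [Fintype n] {ι : Type*} (s : Finset ι)
    (f : ι → Matrix m n R) (v : n → R) :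
    (∑ i ∈ s, f i).mulVec v = ∑ i ∈ s, (f i).mulVec v := by
  ext j
  simp only [Matrix.mulVec, dotProduct, Finset.sum_apply, Matrix.sum_apply,
    Finset.sum_mul]
  rw [Finset.sum_comm]

/-- Any irreducible divisor of the characteristic polynomial divides any
polynomial annihilating the matrix. -/
lemma irred_dvd_annihilator {n : Type*} [Fintype n] [DecidableEq n]
    {p : k[X]} (hp : Irreducible p) {A : Matrix n n k} (hpc : p ∣ A.charpoly)
    {r : k[X]} (hr : Polynomial.aeval A r = 0) : p ∣ r := by
  haveI := Fact.mk hp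
  set L := AdjoinRoot p with hL
  set lam := AdjoinRoot.root p with hlam
  set A' : Matrix n n L := A.map (algebraMap k L) with hA'
  have hch : A'.charpoly = A.charpoly.map (algebraMap k L) := Matrix.charpoly_map A _
  have heval : A'.charpoly.eval lam = 0 := by
    rw [hch, Polynomial.eval_map, ← Polynomial.aeval_def, AdjoinRoot.aeval_eq,
      AdjoinRoot.mk_eq_zero]
    exact hpc
  have hdet : ((lam • (1 : Matrix n n L)) - A').det = 0 := by
    rw [← eval_charpoly']; exact heval
  obtain ⟨v, hv0, hv⟩ := Matrix.exists_mulVec_eq_zero_iff.mpr hdet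
  rw [Matrix.sub_mulVec, Matrix.smul_mulVec, Matrix.one_mulVec] at hv
  have hAv : A'.mulVec v = lam • v := (eq_of_sub_eq_zero hv).symm
  have hpow : ∀ i : ℕ, (A' ^ i).mulVec v = (lam ^ i) • v := by
    intro i; induction i with
    | zero => simp [Matrix.one_mulVec]
    | succ i ihp =>
      rw [pow_succ', ← Matrix.mulVec_mulVec, ihp, Matrix.mulVec_smul, hAv,
        smul_smul, ← pow_succ]
  -- pass to the mapped polynomial
  set r' : L[X] := r.map (algebraMap k L) with hr'
  have hA'eq : A' = (Algebra.ofId k L).mapMatrix A := by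
    ext i j
    simp [AlgHom.mapMatrix_apply, hA', Algebra.ofId_apply]
  have haevalr' : Polynomial.aeval A' r' = 0 := by
    rw [hr', Polynomial.aeval_map_algebraMap, hA'eq, Polynomial.aeval_algHom_apply, hr, map_zero]
  have hsum : (Polynomial.aeval A' r').mulVec v = (Polynomial.aeval lam r') • v := by
    rw [Polynomial.aeval_eq_sum_range (x := A'), Polynomial.aeval_eq_sum_range (x := lam),
      sum_mulVec, Finset.sum_smul]
    refine Finset.sum_congr rfl fun i _ => ?_
    rw [Matrix.smul_mulVec, hpow i, smul_smul, smul_eq_mul]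
  rw [haevalr', Matrix.zero_mulVec] at hsum
  obtain ⟨j, hj⟩ : ∃ j, v j ≠ 0 := by
    by_contra hc
    push_neg at hc
    exact hv0 (funext hc)
  have : Polynomial.aeval lam r' * v j = 0 := by
    have := congrFun hsum j
    simpa [Pi.smul_apply, smul_eq_mul] using this.symm
  have hlam0 : Polynomial.aeval lam r' = 0 := by
    rcases mul_eq_zero.mp this with h | h
    · exact h
    · exact absurd h hj
  have : Polynomial.aeval lam r = 0 := by
    rwa [hr', Polynomial.aeval_map_algebraMap] at hlam0
  rw [AdjoinRoot.aeval_eq, AdjoinRoot.mk_eq_zero] at this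
  exact this

/-- Endomorphism version. -/
lemma irred_dvd_annihilator_end {M : Type*} [AddCommGroup M] [Module k M]
    [FiniteDimensional k M] {p : k[X]} (hp : Irreducible p) (f : Module.End k M)
    (hpc : p ∣ f.charpoly) {r : k[X]} (hr : Polynomial.aeval f r = 0) : p ∣ r := by
  let b := Module.Free.chooseBasis k M
  have hA : (LinearMap.toMatrixAlgEquiv b f).charpoly = f.charpoly := by
    have : LinearMap.toMatrixAlgEquiv b f = LinearMap.toMatrix b b f := by
      ext i j
      rw [LinearMap.toMatrixAlgEquiv_apply, LinearMap.toMatrix_apply]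
    rw [this, LinearMap.charpoly_toMatrix]
  refine irred_dvd_annihilator hp (A := LinearMap.toMatrixAlgEquiv b f) (hA ▸ hpc) ?_
  rw [Polynomial.aeval_algHom_apply, hr, map_zero]


lemma coe_pow_restrict {M : Type*} [AddCommGroup M] [Module k M] (p : Submodule k M)
    (f : Module.End k M) (h : ∀ x ∈ p, f x ∈ p) (i : ℕ) (x : p) :
    (((f.restrict h) ^ i) x : M) = (f ^ i) (x : M) := by
  induction i generalizing x with
  | zero => simp
  | succ i ih =>
    simp only [pow_succ, Module.End.mul_apply, LinearMap.restrict_apply]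
    rw [ih]

lemma coe_aeval_restrict {M : Type*} [AddCommGroup M] [Module k M] (p : Submodule k M)
    (f : Module.End k M) (h : ∀ x ∈ p, f x ∈ p) (P : k[X]) (x : p) :
    ((Polynomial.aeval (f.restrict h) P) x : M) = (Polynomial.aeval f P) (x : M) := by
  rw [Polynomial.aeval_eq_sum_range (x := f.restrict h), Polynomial.aeval_eq_sum_range (x := f)]
  rw [LinearMap.sum_apply, LinearMap.sum_apply]
  rw [Submodule.coe_sum]
  refine Finset.sum_congr rfl fun i _ => ?_
  rw [LinearMap.smul_apply, LinearMap.smul_apply, Submodule.coe_smul, coe_pow_restrict]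

lemma aeval_mapsTo {M : Type*} [AddCommGroup M] [Module k M]
    (f : Module.End k M) (q : k[X]) :
    ∀ x ∈ LinearMap.ker (Polynomial.aeval f q), f x ∈ LinearMap.ker (Polynomial.aeval f q) := by
  intro x hx
  rw [LinearMap.mem_ker] at hx ⊢
  have hcomm : Polynomial.aeval f q * f = f * Polynomial.aeval f q := by
    have h1 : Polynomial.aeval (R := k) f q * Polynomial.aeval (R := k) f X = Polynomial.aeval (R := k) f X *
        Polynomial.aeval (R := k) f q := by
      rw [← _root_.map_mul (Polynomial.aeval (R := k) f) q X,
        ← _root_.map_mul (Polynomial.aeval (R := k) f) X q, mul_comm q X]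
    simpa using h1
  calc (Polynomial.aeval f q) (f x) = (Polynomial.aeval f q * f) x := rfl
    _ = (f * Polynomial.aeval f q) x := by rw [hcomm]
    _ = f ((Polynomial.aeval f q) x) := rfl
    _ = 0 := by rw [hx, map_zero]

lemma isCompl_ker_aeval {M : Type*} [AddCommGroup M] [Module k M]
    (f : Module.End k M) {q₁ q₂ : k[X]} (hco : IsCoprime q₁ q₂)
    (h : Polynomial.aeval f (q₁ * q₂) = 0) :
    IsCompl (LinearMap.ker (Polynomial.aeval f q₁)) (LinearMap.ker (Polynomial.aeval f q₂)) := by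
  obtain ⟨a, b, hab⟩ := hco
  have key : ∀ x : M, (Polynomial.aeval f (a * q₁)) x + (Polynomial.aeval f (b * q₂)) x = x := by
    intro x
    have : Polynomial.aeval f (a * q₁) + Polynomial.aeval f (b * q₂) = 1 := by
      rw [← _root_.map_add (Polynomial.aeval f) (a * q₁) (b * q₂), hab, map_one]
    calc (Polynomial.aeval f (a * q₁)) x + (Polynomial.aeval f (b * q₂)) x
        = (Polynomial.aeval f (a * q₁) + Polynomial.aeval f (b * q₂)) x := rfl
      _ = (1 : Module.End k M) x := by rw [← this]
      _ = x := rfl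
  constructor
  · rw [disjoint_iff]
    rw [Submodule.eq_bot_iff]
    rintro x hx
    rw [Submodule.mem_inf, LinearMap.mem_ker, LinearMap.mem_ker] at hx
    have h1 : (Polynomial.aeval f (a * q₁)) x = 0 := by
      rw [map_mul, Module.End.mul_apply, hx.1, map_zero]
    have h2 : (Polynomial.aeval f (b * q₂)) x = 0 := by
      rw [map_mul, Module.End.mul_apply, hx.2, map_zero]
    have := key x
    rw [h1, h2, add_zero] at this
    exact this.symm
  · rw [codisjoint_iff, eq_top_iff]
    intro x _
    rw [← key x, add_comm]
    apply Submodule.add_mem_sup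
    · rw [LinearMap.mem_ker, ← Module.End.mul_apply,
        ← _root_.map_mul (Polynomial.aeval f) q₁ (b * q₂)]
      have heq : q₁ * (b * q₂) = b * (q₁ * q₂) := by ring
      rw [heq, _root_.map_mul (Polynomial.aeval f) b (q₁ * q₂), Module.End.mul_apply, h]
      simp
    · rw [LinearMap.mem_ker, ← Module.End.mul_apply,
        ← _root_.map_mul (Polynomial.aeval f) q₂ (a * q₁)]
      have heq : q₂ * (a * q₁) = a * (q₁ * q₂) := by ring
      rw [heq, _root_.map_mul (Polynomial.aeval f) a (q₁ * q₂), Module.End.mul_apply, h]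
      simp

/-- Base case: `q` monic irreducible, `q(f) = 0`, `charpoly f = q ^ e`.  Then there
are `e` vectors whose `f`-power translates (up to `deg q`) span `M`. -/
lemma exists_generators_irreducible {M : Type*} [AddCommGroup M] [Module k M]
    [FiniteDimensional k M] (f : Module.End k M) {q : k[X]} (hqm : q.Monic)
    (hirr : Irreducible q) {e : ℕ}
    (h0 : Polynomial.aeval f q = 0) (hch : f.charpoly = q ^ e) :
    ∃ v : Fin e → M, Submodule.span k (Set.range fun pr : Fin q.natDegree × Fin e =>
      ((f ^ (pr.1 : ℕ)) (v pr.2))) = ⊤ := by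
  haveI := Fact.mk hirr
  set K := AdjoinRoot q with hK
  have hq0 : ∀ a ∈ Ideal.span ({q} : Set k[X]), (Polynomial.aeval f).toRingHom a = 0 := by
    intro a ha
    obtain ⟨c, rfl⟩ := Ideal.mem_span_singleton.mp ha
    rw [AlgHom.toRingHom_eq_coe, RingHom.coe_coe, _root_.map_mul, h0, zero_mul]
  let φ : AdjoinRoot q →+* Module.End k M :=
    Ideal.Quotient.lift (Ideal.span ({q} : Set k[X])) (Polynomial.aeval f).toRingHom hq0
  have hφmk : ∀ p : k[X], φ (AdjoinRoot.mk q p) = Polynomial.aeval f p := fun p =>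
    Ideal.Quotient.lift_mk _ _ _
  have hroot : φ (AdjoinRoot.root q) = f := by
    rw [← AdjoinRoot.mk_X, hφmk, Polynomial.aeval_X]
  letI instKM : Module K M :=
    { smul := fun c x => φ c x
      one_smul := by intro x; show φ 1 x = x; rw [map_one]; rfl
      mul_smul := by intro c d x; show φ (c * d) x = φ c (φ d x); rw [map_mul]; rfl
      smul_zero := fun c => map_zero (φ c)
      smul_add := fun c x y => map_add (φ c) x y
      add_smul := by intro c d x; show φ (c + d) x = φ c x + φ d x; rw [map_add]; rfl
      zero_smul := by intro x; show φ 0 x = 0; rw [map_zero]; rfl }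
  have hsmul : ∀ (c : K) (x : M), c • x = (φ c) x := fun _ _ => rfl
  letI : IsScalarTower k K M := by
    constructor
    intro a c x
    rw [hsmul, hsmul, Algebra.smul_def, map_mul]
    have halg : algebraMap k K a = AdjoinRoot.mk q (Polynomial.C a) := rfl
    rw [halg, hφmk, Polynomial.aeval_C, Module.End.mul_apply, Module.algebraMap_end_apply]
  haveI : FiniteDimensional k K :=
    Module.Finite.of_basis (AdjoinRoot.powerBasis' hqm).basis
  haveI : Module.Finite K M := Module.Finite.of_restrictScalars_finite k K M
  have hrankK : Module.finrank k K = q.natDegree := by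
    rw [(AdjoinRoot.powerBasis' hqm).finrank, AdjoinRoot.powerBasis'_dim]
  have hrankM : Module.finrank k M = q.natDegree * e := by
    rw [← LinearMap.charpoly_natDegree f, hch, Polynomial.natDegree_pow, mul_comm]
  have htpos : 0 < q.natDegree := hirr.natDegree_pos
  have hrankKM : Module.finrank K M = e := by
    have := Module.finrank_mul_finrank k K M
    rw [hrankK, hrankM] at this
    exact Nat.eq_of_mul_eq_mul_left htpos this
  let b : Module.Basis (Fin e) K M := Module.finBasisOfFinrankEq K M hrankKM
  refine ⟨fun m => b m, ?_⟩
  rw [eq_top_iff]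
  intro x _
  set W := Submodule.span k (Set.range fun pr : Fin q.natDegree × Fin e =>
    ((f ^ (pr.1 : ℕ)) (b pr.2))) with hW
  have hKmul : ∀ (c : K) (m : Fin e), c • b m ∈ W := by
    intro c m
    let S : Submodule k K :=
      { carrier := {c : K | c • b m ∈ W}
        add_mem' := by
          intro c₁ c₂ h₁ h₂
          simp only [Set.mem_setOf_eq] at h₁ h₂ ⊢
          rw [add_smul]
          exact W.add_mem h₁ h₂
        zero_mem' := by
          simp only [Set.mem_setOf_eq, zero_smul]
          exact W.zero_mem
        smul_mem' := by
          intro a c hc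
          simp only [Set.mem_setOf_eq] at hc ⊢
          rw [smul_assoc]
          exact W.smul_mem a hc }
    suffices hS : ⊤ ≤ S by exact hS trivial
    rw [← (AdjoinRoot.powerBasis' hqm).basis.span_eq]
    rw [Submodule.span_le]
    rintro y ⟨i, rfl⟩
    have hbi : (AdjoinRoot.powerBasis' hqm).basis i =
        (AdjoinRoot.root q) ^ (i : ℕ) := by
      rw [(AdjoinRoot.powerBasis' hqm).coe_basis, AdjoinRoot.powerBasis'_gen]
    show (AdjoinRoot.powerBasis' hqm).basis i • b m ∈ W
    rw [hbi, hsmul, map_pow, hroot]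
    have hidim : (i : ℕ) < q.natDegree := by
      have h2 := i.isLt
      simpa [AdjoinRoot.powerBasis'_dim] using h2
    exact Submodule.subset_span ⟨(⟨(i : ℕ), hidim⟩, m), rfl⟩
  have hx : x = ∑ m : Fin e, b.repr x m • b m := (b.sum_repr x).symm
  rw [hx]
  exact W.sum_mem fun m _ => hKmul _ m



universe u v

lemma exists_generators {k : Type u} [Field k] :
    ∀ (d : ℕ) (q : k[X]), q.Monic → Squarefree q → q.natDegree = d →
    ∀ (M : Type v) [AddCommGroup M] [Module k M] [FiniteDimensional k M],
      ∀ (f : Module.End k M) (e : ℕ),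
      Polynomial.aeval f q = 0 → f.charpoly = q ^ e →
      ∃ v : Fin e → M, Submodule.span k (Set.range fun pr : Fin q.natDegree × Fin e =>
        ((f ^ (pr.1 : ℕ)) (v pr.2))) = ⊤ := by
  intro d
  induction d using Nat.strong_induction_on with
  | _ d ih =>
  intro q hqm hsq hqd M instAG instMod instFD f e h0 hch
  by_cases hdeg0 : q.natDegree = 0
  · have hq1 : q = 1 := hqm.natDegree_eq_zero.mp hdeg0
    have h1 : (1 : Module.End k M) = 0 := by rw [hq1, map_one] at h0; exact h0
    refine ⟨fun _ => 0, ?_⟩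
    rw [eq_top_iff]
    intro x _
    have hx0 : x = 0 := by
      calc x = (1 : Module.End k M) x := rfl
        _ = (0 : Module.End k M) x := by rw [h1]
        _ = 0 := rfl
    rw [hx0]
    exact Submodule.zero_mem _
  by_cases hqirr : Irreducible q
  · exact exists_generators_irreducible f hqm hqirr h0 hch
  -- main splitting case
  have hq0' : q ≠ 0 := hqm.ne_zero
  obtain ⟨p0, hp0, hp0q⟩ := WfDvdMonoid.exists_irreducible_factor
    (not_isUnit_of_natDegree_pos q (by omega)) hq0'
  have hp0ne : p0 ≠ 0 := hp0.ne_zero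
  set q₁ := p0 * Polynomial.C (p0.leadingCoeff)⁻¹ with hq₁def
  have hq₁m : q₁.Monic := Polynomial.monic_mul_leadingCoeff_inv hp0ne
  have hCunit : IsUnit (Polynomial.C (p0.leadingCoeff)⁻¹) :=
    Polynomial.isUnit_C.mpr (isUnit_iff_ne_zero.mpr
      (inv_ne_zero (Polynomial.leadingCoeff_ne_zero.mpr hp0ne)))
  have hassoc : Associated p0 q₁ := ⟨hCunit.unit, by rw [hq₁def, IsUnit.unit_spec]⟩
  have hq₁irr : Irreducible q₁ := hassoc.irreducible hp0
  have hq₁q : q₁ ∣ q := hassoc.symm.dvd.trans hp0q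
  obtain ⟨q₂, hq12⟩ := hq₁q
  have hq₂m : q₂.Monic := hq₁m.of_mul_monic_left (hq12 ▸ hqm)
  have h1pos : 0 < q₁.natDegree := hq₁irr.natDegree_pos
  have hdsum : q₁.natDegree + q₂.natDegree = d := by
    rw [← hqd, hq12, Polynomial.natDegree_mul hq₁m.ne_zero hq₂m.ne_zero]
  have h2pos : 0 < q₂.natDegree := by
    by_contra hcon
    push_neg at hcon
    have hq₂1 : q₂ = 1 := hq₂m.natDegree_eq_zero.mp (by omega)
    exact hqirr (by rw [hq12, hq₂1, mul_one]; exact hq₁irr)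
  have hsq₂ : Squarefree q₂ := (hq12 ▸ hsq).of_mul_right
  have hndvd : ¬ q₁ ∣ q₂ := by
    intro hdvd
    exact hq₁irr.not_isUnit (hsq q₁ (by rw [hq12]; exact mul_dvd_mul_left q₁ hdvd))
  have hco : IsCoprime q₁ q₂ := hq₁irr.coprime_iff_not_dvd.mpr hndvd
  have h0' : Polynomial.aeval f (q₁ * q₂) = 0 := by rw [← hq12]; exact h0
  have hcompl := isCompl_ker_aeval f hco h0'
  set M₁ := LinearMap.ker (Polynomial.aeval f q₁) with hM₁
  set M₂ := LinearMap.ker (Polynomial.aeval f q₂) with hM₂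
  have hm1 := aeval_mapsTo f q₁
  have hm2 := aeval_mapsTo f q₂
  set f₁ := f.restrict hm1 with hf₁
  set f₂ := f.restrict hm2 with hf₂
  have haev1 : Polynomial.aeval f₁ q₁ = 0 := by
    apply LinearMap.ext
    intro x
    apply Subtype.ext
    rw [hf₁, coe_aeval_restrict]
    simpa using (LinearMap.mem_ker.mp x.2)
  have haev2 : Polynomial.aeval f₂ q₂ = 0 := by
    apply LinearMap.ext
    intro x
    apply Subtype.ext
    rw [hf₂, coe_aeval_restrict]
    simpa using (LinearMap.mem_ker.mp x.2)
  -- charpoly splits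
  set φ := Submodule.prodEquivOfIsCompl M₁ M₂ hcompl with hφ
  have hconj : φ.conj (f₁.prodMap f₂) = f := by
    apply LinearMap.ext
    intro x
    obtain ⟨⟨x₁, x₂⟩, rfl⟩ : ∃ y, φ y = x := ⟨φ.symm x, φ.apply_symm_apply x⟩
    rw [LinearEquiv.conj_apply_apply, LinearEquiv.symm_apply_apply]
    have hφx : ∀ z : M₁ × M₂, φ z = (z.1 : M) + (z.2 : M) := fun z => rfl
    rw [LinearMap.prodMap_apply, hφx, hφx]
    simp only [map_add]
    have hr1 : ((f₁ x₁ : M₁) : M) = f (x₁ : M) := by rw [hf₁, LinearMap.restrict_apply]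
    have hr2 : ((f₂ x₂ : M₂) : M) = f (x₂ : M) := by rw [hf₂, LinearMap.restrict_apply]
    rw [hr1, hr2]
  have hchprod : f.charpoly = f₁.charpoly * f₂.charpoly := by
    have h1 : (φ.conj (f₁.prodMap f₂)).charpoly = f₁.charpoly * f₂.charpoly := by
      rw [LinearEquiv.charpoly_conj, LinearMap.charpoly_prodMap]
    rw [hconj] at h1
    exact h1
  have hc1m : f₁.charpoly.Monic := f₁.charpoly_monic
  have hc2m : f₂.charpoly.Monic := f₂.charpoly_monic
  obtain ⟨a, hc1⟩ := eq_pow_of_irred_divisors q₁ hq₁irr hq₁m f₁.charpoly.natDegree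
    f₁.charpoly rfl hc1m (fun p hp hpd => irred_dvd_annihilator_end hp f₁ hpd haev1)
  have hdiv2 : ∀ p : k[X], Irreducible p → p ∣ f₂.charpoly → p ∣ q₂ :=
    fun p hp hpd => irred_dvd_annihilator_end hp f₂ hpd haev2
  have hq₁pr : Prime q₁ := UniqueFactorizationMonoid.irreducible_iff_prime.mp hq₁irr
  have hndvd2 : ¬ q₁ ∣ f₂.charpoly := fun hd => hndvd (hdiv2 q₁ hq₁irr hd)
  have hmul : q₁ ^ a * f₂.charpoly = q₁ ^ e * q₂ ^ e := by
    have hthis : f₁.charpoly * f₂.charpoly = q₁ ^ e * q₂ ^ e := by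
      rw [← hchprod, hch, hq12, mul_pow]
    rw [hc1] at hthis
    exact hthis
  have hq₁0 : q₁ ≠ 0 := hq₁m.ne_zero
  have hae : a = e := by
    have hle1 : a ≤ e := by
      have hdvd1 : q₁ ^ a ∣ q₁ ^ e * q₂ ^ e := ⟨f₂.charpoly, hmul.symm⟩
      have hdvd2' : q₁ ^ a ∣ q₁ ^ e :=
        (Prime.pow_dvd_of_dvd_mul_right hq₁pr a
          (fun h => hndvd (hq₁pr.dvd_of_dvd_pow h)) hdvd1)
      exact (pow_dvd_pow_iff hq₁0 hq₁irr.not_isUnit).mp hdvd2'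
    have hle2 : e ≤ a := by
      have hdvd1 : q₁ ^ e ∣ q₁ ^ a * f₂.charpoly := ⟨q₂ ^ e, hmul⟩
      have hdvd2' : q₁ ^ e ∣ q₁ ^ a :=
        Prime.pow_dvd_of_dvd_mul_right hq₁pr e hndvd2 hdvd1
      exact (pow_dvd_pow_iff hq₁0 hq₁irr.not_isUnit).mp hdvd2'
    omega
  have hc1' : f₁.charpoly = q₁ ^ e := by rw [hc1, hae]
  have hc2 : f₂.charpoly = q₂ ^ e := by
    have := hmul
    rw [hae] at this
    exact mul_left_cancel₀ (pow_ne_zero e hq₁0) this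
  obtain ⟨v₁, hv₁⟩ := exists_generators_irreducible f₁ hq₁m hq₁irr haev1 hc1'
  obtain ⟨v₂, hv₂⟩ := ih q₂.natDegree (by omega) q₂ hq₂m hsq₂ rfl M₂ f₂ e haev2 hc2
  -- combine
  refine ⟨fun m => (v₁ m : M) + (v₂ m : M), ?_⟩
  set t := q.natDegree with ht
  have htpos : 0 < t := by omega
  set x0 : Fin e → M := fun m => (v₁ m : M) + (v₂ m : M) with hx0def
  set W := Submodule.span k (Set.range fun pr : Fin t × Fin e =>
      ((f ^ (pr.1 : ℕ)) (x0 pr.2))) with hWdef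
  rw [eq_top_iff]
  have hWf : ∀ x ∈ W, f x ∈ W := by
    have hle : W ≤ Submodule.comap f W := by
      rw [hWdef, Submodule.span_le]
      rintro y ⟨⟨i, m⟩, rfl⟩
      simp only [Submodule.mem_comap]
      show f ((f ^ (i : ℕ)) (x0 m)) ∈ W
      have hfp : f ((f ^ (i : ℕ)) (x0 m)) = (f ^ ((i : ℕ) + 1)) (x0 m) := by
        rw [pow_succ']
        rfl
      rw [hfp]
      by_cases hlt : (i : ℕ) + 1 < t
      · exact Submodule.subset_span ⟨(⟨(i : ℕ) + 1, hlt⟩, m), rfl⟩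
      · have hit : (i : ℕ) + 1 = t := by have := i.isLt; omega
        rw [hit]
        have hsum : (∑ j ∈ Finset.range (t + 1), q.coeff j • f ^ j) (x0 m) = 0 := by
          rw [← Polynomial.aeval_eq_sum_range' (by omega : q.natDegree < t + 1), h0]
          rfl
        rw [LinearMap.sum_apply, Finset.sum_range_succ, LinearMap.smul_apply] at hsum
        have hct : q.coeff t = 1 := by
          have h3 := hqm.coeff_natDegree
          rwa [← ht] at h3
        rw [hct, one_smul] at hsum
        have hft : (f ^ t) (x0 m) =
            - ∑ j ∈ Finset.range t, (q.coeff j • f ^ j) (x0 m) := by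
          exact eq_neg_of_add_eq_zero_right hsum
        rw [hft]
        apply W.neg_mem
        apply W.sum_mem
        intro j hj
        rw [LinearMap.smul_apply]
        apply W.smul_mem
        exact Submodule.subset_span ⟨(⟨j, Finset.mem_range.mp hj⟩, m), rfl⟩
    exact fun x hx => hle hx
  have hWpow : ∀ (i : ℕ), ∀ x ∈ W, (f ^ i) x ∈ W := by
    intro i
    induction i with
    | zero => intro x hx; simpa using hx
    | succ i ihp =>
      intro x hx
      have : (f ^ (i + 1)) x = f ((f ^ i) x) := by rw [pow_succ']; rfl
      rw [this]
      exact hWf _ (ihp x hx)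
  have hWaeval : ∀ (P : k[X]), ∀ x ∈ W, (Polynomial.aeval f P) x ∈ W := by
    intro P x hx
    rw [Polynomial.aeval_eq_sum_range (x := f), LinearMap.sum_apply]
    apply W.sum_mem
    intro j _
    rw [LinearMap.smul_apply]
    exact W.smul_mem _ (hWpow j x hx)
  have hvm : ∀ m : Fin e, x0 m ∈ W := by
    intro m
    have : (f ^ ((⟨0, htpos⟩ : Fin t) : ℕ)) (x0 m) = x0 m := by simp
    exact this ▸ Submodule.subset_span ⟨(⟨0, htpos⟩, m), rfl⟩
  have hq2f : ∀ m : Fin e, (Polynomial.aeval f q₂) (x0 m) =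
      (Polynomial.aeval f q₂) (v₁ m : M) := by
    intro m
    rw [hx0def]
    simp only [map_add]
    have : (Polynomial.aeval f q₂) (v₂ m : M) = 0 := LinearMap.mem_ker.mp (v₂ m).2
    rw [this, add_zero]
  obtain ⟨aa, bb, hab⟩ := hco
  have hv1W : ∀ m : Fin e, (v₁ m : M) ∈ W := by
    intro m
    have hker1 : (Polynomial.aeval f q₁) (v₁ m : M) = 0 := LinearMap.mem_ker.mp (v₁ m).2
    have h₁ : (Polynomial.aeval f (aa * q₁)) (v₁ m : M) = 0 := by
      rw [_root_.map_mul (Polynomial.aeval (R := k) f) aa q₁, Module.End.mul_apply, hker1,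
        map_zero]
    have hrew : (v₁ m : M) = (Polynomial.aeval f (bb * q₂)) (v₁ m : M) := by
      have hone : (Polynomial.aeval f (aa * q₁ + bb * q₂)) (v₁ m : M) = (v₁ m : M) := by
        rw [hab, map_one]
        rfl
      rw [_root_.map_add (Polynomial.aeval (R := k) f) (aa * q₁) (bb * q₂)] at hone
      rw [LinearMap.add_apply, h₁, zero_add] at hone
      exact hone.symm
    rw [hrew, _root_.map_mul (Polynomial.aeval (R := k) f) bb q₂, Module.End.mul_apply,
      ← hq2f m]
    exact hWaeval bb _ (hWaeval q₂ _ (hvm m))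
  have hv2W : ∀ m : Fin e, (v₂ m : M) ∈ W := by
    intro m
    have hxm : (v₂ m : M) = x0 m - (v₁ m : M) := by
      show (v₂ m : M) = ((v₁ m : M) + (v₂ m : M)) - (v₁ m : M)
      exact (add_sub_cancel_left _ _).symm
    rw [hxm]
    exact W.sub_mem (hvm m) (hv1W m)
  have hM1W : ∀ x ∈ M₁, x ∈ W := by
    intro x hx
    have hmem : (⟨x, hx⟩ : M₁) ∈ Submodule.span k
        (Set.range fun pr : Fin q₁.natDegree × Fin e => ((f₁ ^ (pr.1 : ℕ)) (v₁ pr.2))) := by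
      rw [hv₁]; trivial
    have hle : Submodule.span k
        (Set.range fun pr : Fin q₁.natDegree × Fin e => ((f₁ ^ (pr.1 : ℕ)) (v₁ pr.2))) ≤
        Submodule.comap M₁.subtype W := by
      rw [Submodule.span_le]
      rintro y ⟨⟨i, m⟩, rfl⟩
      simp only [Submodule.mem_comap, Submodule.coe_subtype]
      show (((f.restrict hm1 ^ (i : ℕ)) (v₁ m) : M₁) : M) ∈ W
      rw [coe_pow_restrict]
      exact hWpow (i : ℕ) _ (hv1W m)
    exact hle hmem
  have hM2W : ∀ x ∈ M₂, x ∈ W := by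
    intro x hx
    have hmem : (⟨x, hx⟩ : M₂) ∈ Submodule.span k
        (Set.range fun pr : Fin q₂.natDegree × Fin e => ((f₂ ^ (pr.1 : ℕ)) (v₂ pr.2))) := by
      rw [hv₂]; trivial
    have hle : Submodule.span k
        (Set.range fun pr : Fin q₂.natDegree × Fin e => ((f₂ ^ (pr.1 : ℕ)) (v₂ pr.2))) ≤
        Submodule.comap M₂.subtype W := by
      rw [Submodule.span_le]
      rintro y ⟨⟨i, m⟩, rfl⟩
      simp only [Submodule.mem_comap, Submodule.coe_subtype]
      show (((f.restrict hm2 ^ (i : ℕ)) (v₂ m) : M₂) : M) ∈ W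
      rw [coe_pow_restrict]
      exact hWpow (i : ℕ) _ (hv2W m)
    exact hle hmem
  intro x _
  have hxsup : x ∈ M₁ ⊔ M₂ := by rw [hcompl.sup_eq_top]; trivial
  obtain ⟨y, hy, z, hz, rfl⟩ := Submodule.mem_sup.mp hxsup
  exact W.add_mem (hM1W y hy) (hM2W z hz)


/-- Matrix-level field core. -/
lemma matrix_field_core {k : Type u} [Field k] {t e : ℕ} (q : k[X]) (hqm : q.Monic)
    (hsq : Squarefree q) (hdeg : q.natDegree = t)
    (A : Matrix (Fin (t * e)) (Fin (t * e)) k) (hch : A.charpoly = q ^ e)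
    (h0 : Polynomial.aeval A q = 0) :
    ∃ v : Fin e → (Fin (t * e) → k),
      Submodule.span k (Set.range fun pr : Fin t × Fin e =>
        (A ^ (pr.1 : ℕ)).mulVec (v pr.2)) = ⊤ := by
  subst hdeg
  set f : Module.End k (Fin (q.natDegree * e) → k) := Matrix.toLinAlgEquiv' A with hfdef
  have hf1 : (f : (Fin (q.natDegree * e) → k) →ₗ[k] _) = Matrix.toLin' A := rfl
  have hAf : LinearMap.toMatrix (Pi.basisFun k (Fin (q.natDegree * e)))
      (Pi.basisFun k (Fin (q.natDegree * e))) f = A := by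
    rw [LinearMap.toMatrix_eq_toMatrix', hf1]
    exact LinearMap.toMatrix'_toLin' A
  have hfc : f.charpoly = q ^ e := by
    rw [← LinearMap.charpoly_toMatrix f (Pi.basisFun k (Fin (q.natDegree * e))), hAf, hch]
  have haev : Polynomial.aeval f q = 0 := by
    have h2 := Polynomial.aeval_algHom_apply
      (Matrix.toLinAlgEquiv' (n := Fin (q.natDegree * e)) (R := k)) A q
    rw [h0, map_zero] at h2
    rw [hfdef]
    exact h2
  obtain ⟨v, hv⟩ := exists_generators q.natDegree q hqm hsq rfl
    (Fin (q.natDegree * e) → k) f e haev hfc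
  refine ⟨v, ?_⟩
  have hfun : (fun pr : Fin q.natDegree × Fin e => (A ^ (pr.1 : ℕ)).mulVec (v pr.2)) =
      (fun pr : Fin q.natDegree × Fin e => (f ^ (pr.1 : ℕ)) (v pr.2)) := by
    funext pr
    have h3 : f ^ (pr.1 : ℕ) = Matrix.toLinAlgEquiv' (A ^ (pr.1 : ℕ)) := by
      rw [hfdef, ← map_pow]
    rw [h3, Matrix.toLinAlgEquiv'_apply]
  rw [hfun]
  exact hv

/-- Clearing denominators in the Bezout identity coming from separability over `ℚ`. -/
lemma exists_bezout (Q : Polynomial ℤ) (hirr : Irreducible (Q.map (Int.castRingHom ℚ))) :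
    ∃ (a b : Polynomial ℤ) (dd : ℤ), dd ≠ 0 ∧
      a * Q + b * Q.derivative = Polynomial.C dd := by
  have hsep : (Q.map (Int.castRingHom ℚ)).Separable := hirr.separable
  obtain ⟨a0, b0, hab⟩ := hsep
  rw [Polynomial.derivative_map] at hab
  obtain ⟨da, hda⟩ := IsLocalization.integerNormalization_map_to_map (nonZeroDivisors ℤ) a0
  obtain ⟨db, hdb⟩ := IsLocalization.integerNormalization_map_to_map (nonZeroDivisors ℤ) b0
  rw [algebraMap_int_eq] at hda hdb
  refine ⟨Polynomial.C (db : ℤ) * IsLocalization.integerNormalization (nonZeroDivisors ℤ) a0,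
    Polynomial.C (da : ℤ) * IsLocalization.integerNormalization (nonZeroDivisors ℤ) b0,
    (da : ℤ) * (db : ℤ),
    mul_ne_zero (nonZeroDivisors.coe_ne_zero da) (nonZeroDivisors.coe_ne_zero db), ?_⟩
  apply Polynomial.map_injective (Int.castRingHom ℚ) (fun x y h => Int.cast_injective h)
  rw [Polynomial.map_add, Polynomial.map_mul, Polynomial.map_mul, Polynomial.map_mul,
    Polynomial.map_mul, Polynomial.map_C, Polynomial.map_C, Polynomial.map_C, hda, hdb]
  simp only [eq_intCast]
  have hsa : ((da : ℤ) • a0) = Polynomial.C ((da : ℤ) : ℚ) * a0 := by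
    rw [zsmul_eq_mul, Polynomial.C_eq_intCast]
  have hsb : ((db : ℤ) • b0) = Polynomial.C ((db : ℤ) : ℚ) * b0 := by
    rw [zsmul_eq_mul, Polynomial.C_eq_intCast]
  rw [hsa, hsb]
  have hC : (Polynomial.C (((da : ℤ) * (db : ℤ) : ℤ) : ℚ) : Polynomial ℚ) =
      Polynomial.C ((da : ℤ) : ℚ) * Polynomial.C ((db : ℤ) : ℚ) := by
    rw [← Polynomial.C_mul]
    norm_cast
  rw [hC]
  calc Polynomial.C ((db : ℤ) : ℚ) * (Polynomial.C ((da : ℤ) : ℚ) * a0) *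
        Q.map (Int.castRingHom ℚ) +
      Polynomial.C ((da : ℤ) : ℚ) * (Polynomial.C ((db : ℤ) : ℚ) * b0) *
        (Q.derivative.map (Int.castRingHom ℚ))
      = Polynomial.C ((da : ℤ) : ℚ) * Polynomial.C ((db : ℤ) : ℚ) *
        (a0 * Q.map (Int.castRingHom ℚ) + b0 * (Q.derivative.map (Int.castRingHom ℚ))) := by
        ring
    _ = Polynomial.C ((da : ℤ) : ℚ) * Polynomial.C ((db : ℤ) : ℚ) := by rw [hab, mul_one]


end ConjCompanionAux

/-- The companion matrix of a monic polynomial `Q` of degree `t`: ones on the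
subdiagonal and the negated coefficients of `Q` in the last column, so that its
characteristic polynomial is `Q`. -/
def companionMatrix {R : Type*} [CommRing R] (t : ℕ) (Q : Polynomial R) :
    Matrix (Fin t) (Fin t) R := fun i j =>
  if (j : ℕ) = t - 1 then -Q.coeff (i : ℕ)
  else if (i : ℕ) = (j : ℕ) + 1 then 1 else 0

open ConjCompanionAux in
/-- **Standard form of matrices with characteristic polynomial `Q^e`, for large `l`.**
Let `Q ∈ ℤ[x]` be monic of degree `t`, irreducible over `ℚ`, and let `e ≥ 1`, `n = t·e`.
There is a positive `N` such that for every prime `l > N`, every `n × n` matrix `A`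
over `ℤ_l` with characteristic polynomial `Q^e` and `Q(A) = 0` is `GL_n(ℤ_l)`-conjugate
to the block-diagonal matrix made of `e` copies of the companion matrix of `Q`. -/
theorem conj_to_companion_blocks_of_large_l (t e : ℕ) (he : 1 ≤ e)
    (Q : Polynomial ℤ) (hQ : Q.Monic) (hdeg : Q.natDegree = t)
    (hirr : Irreducible (Q.map (Int.castRingHom ℚ))) :
    ∃ N : ℕ, 0 < N ∧ ∀ (l : ℕ) [Fact l.Prime], N < l →
      ∀ A : Matrix (Fin (t * e)) (Fin (t * e)) ℤ_[l],
        A.charpoly = (Q.map (Int.castRingHom ℤ_[l])) ^ e →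
        Polynomial.aeval A Q = 0 →
        ∃ U : GL (Fin (t * e)) ℤ_[l],
          (U : Matrix (Fin (t * e)) (Fin (t * e)) ℤ_[l]) * A *
              ((U⁻¹ : GL (Fin (t * e)) ℤ_[l]) : Matrix (Fin (t * e)) (Fin (t * e)) ℤ_[l]) =
            Matrix.reindex finProdFinEquiv finProdFinEquiv
              (Matrix.blockDiagonal fun _ : Fin e =>
                companionMatrix t (Q.map (Int.castRingHom ℤ_[l]))) := by
  obtain ⟨a, b, dd, hdd0, hbez⟩ := exists_bezout Q hirr
  refine ⟨dd.natAbs, Int.natAbs_pos.mpr hdd0, ?_⟩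
  intro l hlp hl A hch h0
  haveI : NeZero l := ⟨hlp.1.ne_zero⟩
  set qp : Polynomial ℤ_[l] := Q.map (Int.castRingHom ℤ_[l]) with hqp
  set qbar : Polynomial (ZMod l) := Q.map (Int.castRingHom (ZMod l)) with hqbar
  have htpos : 0 < t := by
    have h1 : (Q.map (Int.castRingHom ℚ)).natDegree = Q.natDegree :=
      hQ.natDegree_map _
    have h2 := hirr.natDegree_pos
    omega
  have hqpm : qp.Monic := hQ.map _
  have hqpdeg : qp.natDegree = t := by rw [hqp, hQ.natDegree_map, hdeg]
  have hqbarm : qbar.Monic := hQ.map _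
  have hqbardeg : qbar.natDegree = t := by rw [hqbar, hQ.natDegree_map, hdeg]
  -- the Bezout constant is invertible mod l
  have hdbar : ((dd : ℤ) : ZMod l) ≠ 0 := by
    rw [Ne, ZMod.intCast_zmod_eq_zero_iff_dvd]
    intro hdvd
    have h3 : l ∣ dd.natAbs := Int.natAbs_dvd_natAbs.mpr (by simpa using hdvd)
    have h4 := Nat.le_of_dvd (Int.natAbs_pos.mpr hdd0) h3
    omega
  -- separability of `qbar`
  have hsep : qbar.Separable := by
    have hmap := congrArg (Polynomial.map (Int.castRingHom (ZMod l))) hbez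
    rw [Polynomial.map_add, Polynomial.map_mul, Polynomial.map_mul, Polynomial.map_C] at hmap
    refine ⟨Polynomial.C (((dd : ℤ) : ZMod l))⁻¹ * (a.map (Int.castRingHom (ZMod l))),
      Polynomial.C (((dd : ℤ) : ZMod l))⁻¹ * (b.map (Int.castRingHom (ZMod l))), ?_⟩
    have hder : qbar.derivative = Q.derivative.map (Int.castRingHom (ZMod l)) :=
      Polynomial.derivative_map _ _
    rw [hder]
    calc Polynomial.C (((dd : ℤ) : ZMod l))⁻¹ * (a.map (Int.castRingHom (ZMod l))) * qbar +
          Polynomial.C (((dd : ℤ) : ZMod l))⁻¹ * (b.map (Int.castRingHom (ZMod l))) *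
            (Q.derivative.map (Int.castRingHom (ZMod l)))
        = Polynomial.C (((dd : ℤ) : ZMod l))⁻¹ *
            (a.map (Int.castRingHom (ZMod l)) * qbar +
             b.map (Int.castRingHom (ZMod l)) * (Q.derivative.map (Int.castRingHom (ZMod l)))) := by
          ring
      _ = Polynomial.C (((dd : ℤ) : ZMod l))⁻¹ * Polynomial.C ((Int.castRingHom (ZMod l)) dd) := by
          rw [hqbar, hmap]
      _ = 1 := by
          rw [← Polynomial.C_mul]
          have : ((Int.castRingHom (ZMod l)) dd) = ((dd : ℤ) : ZMod l) := rfl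
          rw [this, inv_mul_cancel₀ hdbar, Polynomial.C_1]
  have hsqf : Squarefree qbar := hsep.squarefree
  -- aeval of the mapped polynomial over ℤ_[l]
  have h0p : Polynomial.aeval A qp = 0 := by
    rw [hqp, ← algebraMap_int_eq, Polynomial.aeval_map_algebraMap]
    exact h0
  -- reduction mod l
  set rho : ℤ_[l] →+* ZMod l := @PadicInt.toZMod l hlp with hrho
  set Abar : Matrix (Fin (t * e)) (Fin (t * e)) (ZMod l) := A.map rho with hAbar
  have hcomp : rho.comp (Int.castRingHom ℤ_[l]) = Int.castRingHom (ZMod l) :=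
    RingHom.ext_int _ _
  have hchbar : Abar.charpoly = qbar ^ e := by
    rw [hAbar, Matrix.charpoly_map, hch, Polynomial.map_pow, hqp, Polynomial.map_map, hcomp,
      hqbar]
  have h0bar : Polynomial.aeval Abar qbar = 0 := by
    have h4 : Polynomial.aeval Abar (Q.map (algebraMap ℤ (ZMod l))) = Polynomial.aeval Abar Q :=
      Polynomial.aeval_map_algebraMap _ _ _
    have h5 := Polynomial.aeval_algHom_apply
      ((rho.mapMatrix (m := Fin (t * e))).toIntAlgHom) A Q
    rw [h0, map_zero] at h5
    rw [hqbar, ← algebraMap_int_eq, h4]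
    have h6 : Abar = (rho.mapMatrix (m := Fin (t * e))).toIntAlgHom A := rfl
    rw [h6]
    exact h5
  -- field core over ZMod l
  obtain ⟨vbar, hvbar⟩ := matrix_field_core qbar hqbarm hsqf hqbardeg Abar hchbar h0bar
  have hcard : Fintype.card (Fin t × Fin e) = Module.finrank (ZMod l) (Fin (t * e) → ZMod l) := by
    simp [Module.finrank_fin_fun]
  let bB := basisOfTopLeSpanOfCardEqFinrank
    (fun pr : Fin t × Fin e => (Abar ^ (pr.1 : ℕ)).mulVec (vbar pr.2))
    (le_of_eq hvbar.symm) hcard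
  -- lifts of the generators
  set vlift : Fin e → (Fin (t * e) → ℤ_[l]) := fun m i => ((vbar m i).val : ℤ_[l]) with hvlift
  have hliftbar : ∀ m i, rho (vlift m i) = vbar m i := by
    intro m i
    rw [hvlift]
    show rho (((vbar m i).val : ℕ) : ℤ_[l]) = vbar m i
    rw [map_natCast]
    exact ZMod.natCast_rightInverse (vbar m i)
  -- the change of basis matrix
  set V : Matrix (Fin (t * e)) (Fin (t * e)) ℤ_[l] := Matrix.of fun i j =>
    ((A ^ (((finProdFinEquiv.symm j).1 : Fin t) : ℕ)).mulVec
      (vlift (finProdFinEquiv.symm j).2)) i with hV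
  have hpowmap : ∀ p : ℕ, (A ^ p).map rho = Abar ^ p := by
    intro p
    have h7 := map_pow (rho.mapMatrix (m := Fin (t * e))) A p
    simpa [RingHom.mapMatrix_apply, hAbar] using h7
  have hVcol : ∀ (i j : Fin (t * e)), rho (V i j) =
      ((Abar ^ (((finProdFinEquiv.symm j).1 : Fin t) : ℕ)).mulVec
        (vbar (finProdFinEquiv.symm j).2)) i := by
    intro i j
    show rho (((A ^ (((finProdFinEquiv.symm j).1 : Fin t) : ℕ)).mulVec
      (vlift (finProdFinEquiv.symm j).2)) i) = _
    rw [RingHom.map_mulVec, hpowmap]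
    congr 1
    funext x
    exact hliftbar _ x
  have hVmap : V.map rho =
      (Pi.basisFun (ZMod l) (Fin (t * e))).toMatrix (⇑(bB.reindex finProdFinEquiv)) := by
    ext i j
    rw [Matrix.map_apply, Module.Basis.toMatrix_apply, Pi.basisFun_repr, Module.Basis.reindex_apply]
    show rho (V i j) = (bB (finProdFinEquiv.symm j)) i
    rw [hVcol]
    have h8 : ⇑bB = fun pr : Fin t × Fin e => (Abar ^ (pr.1 : ℕ)).mulVec (vbar pr.2) :=
      coe_basisOfTopLeSpanOfCardEqFinrank _ _ _
    rw [h8]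
  haveI : Invertible ((Pi.basisFun (ZMod l) (Fin (t * e))).toMatrix
      (⇑(bB.reindex finProdFinEquiv))) :=
    (Pi.basisFun (ZMod l) (Fin (t * e))).invertibleToMatrix (bB.reindex finProdFinEquiv)
  have hdetbar : IsUnit ((V.map rho).det) := by
    rw [hVmap]
    exact (Matrix.isUnit_iff_isUnit_det _).mp (isUnit_of_invertible _)
  have hdetV : IsUnit V.det := by
    by_contra hnu
    have h9 : rho V.det = 0 := by
      rw [← RingHom.mem_ker, hrho, PadicInt.ker_toZMod, IsLocalRing.mem_maximalIdeal,
        mem_nonunits_iff]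
      exact hnu
    have h10 : rho V.det = (V.map rho).det := RingHom.map_det rho V
    rw [h9] at h10
    rw [← h10] at hdetbar
    exact not_isUnit_zero hdetbar
  -- the companion relation A * V = V * C
  set Cmat : Matrix (Fin (t * e)) (Fin (t * e)) ℤ_[l] :=
    Matrix.reindex finProdFinEquiv finProdFinEquiv
      (Matrix.blockDiagonal fun _ : Fin e => companionMatrix t qp) with hCmat
  have hApow : A ^ t = - ∑ j ∈ Finset.range t, qp.coeff j • A ^ j := by
    have hs := Polynomial.aeval_eq_sum_range' (p := qp) (x := A) (n := t + 1) (by omega)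
    rw [h0p] at hs
    rw [Finset.sum_range_succ] at hs
    have hct : qp.coeff t = 1 := by rw [← hqpdeg]; exact hqpm.coeff_natDegree
    rw [hct, one_smul] at hs
    exact eq_neg_of_add_eq_zero_right hs.symm
  have hAV : A * V = V * Cmat := by
    ext i j
    obtain ⟨⟨jt, je⟩, rfl⟩ : ∃ p : Fin t × Fin e, finProdFinEquiv p = j :=
      ⟨finProdFinEquiv.symm j, Equiv.apply_symm_apply _ _⟩
    have hcolV : ∀ (x : Fin (t * e)) (pt : Fin t) (pe : Fin e),
        V x (finProdFinEquiv (pt, pe)) = ((A ^ (pt : ℕ)).mulVec (vlift pe)) x := by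
      intro x pt pe
      show ((A ^ (((finProdFinEquiv.symm (finProdFinEquiv (pt, pe))).1 : Fin t) : ℕ)).mulVec
        (vlift (finProdFinEquiv.symm (finProdFinEquiv (pt, pe))).2)) x = _
      rw [Equiv.symm_apply_apply]
    have hL : (A * V) i (finProdFinEquiv (jt, je)) =
        ((A ^ ((jt : ℕ) + 1)).mulVec (vlift je)) i := by
      rw [Matrix.mul_apply]
      have h11 : ∀ x, A i x * V x (finProdFinEquiv (jt, je)) =
          A i x * ((A ^ (jt : ℕ)).mulVec (vlift je)) x := by
        intro x; rw [hcolV]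
      rw [Finset.sum_congr rfl fun x _ => h11 x]
      show (A.mulVec ((A ^ (jt : ℕ)).mulVec (vlift je))) i = _
      rw [Matrix.mulVec_mulVec, ← pow_succ']
    have hR : (V * Cmat) i (finProdFinEquiv (jt, je)) =
        ∑ xt : Fin t, ((A ^ (xt : ℕ)).mulVec (vlift je)) i * companionMatrix t qp xt jt := by
      rw [Matrix.mul_apply]
      rw [← Equiv.sum_comp finProdFinEquiv
        (fun x => V i x * Cmat x (finProdFinEquiv (jt, je)))]
      rw [Fintype.sum_prod_type]
      have h12 : ∀ (xt : Fin t) (xe : Fin e),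
          V i (finProdFinEquiv (xt, xe)) * Cmat (finProdFinEquiv (xt, xe))
            (finProdFinEquiv (jt, je)) =
          if xe = je then ((A ^ (xt : ℕ)).mulVec (vlift xe)) i * companionMatrix t qp xt jt
          else 0 := by
        intro xt xe
        rw [hcolV, hCmat, Matrix.reindex_apply, Matrix.submatrix_apply,
          Equiv.symm_apply_apply, Equiv.symm_apply_apply, Matrix.blockDiagonal_apply]
        by_cases hxe : xe = je
        · rw [if_pos hxe, if_pos hxe]
        · rw [if_neg hxe, if_neg hxe, mul_zero]
      rw [Finset.sum_congr rfl fun xt _ => Finset.sum_congr rfl fun xe _ => h12 xt xe]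
      refine Finset.sum_congr rfl fun xt _ => ?_
      rw [Finset.sum_ite_eq' Finset.univ je
        (fun xe => ((A ^ (xt : ℕ)).mulVec (vlift xe)) i * companionMatrix t qp xt jt)]
      rw [if_pos (Finset.mem_univ je)]
    rw [hL, hR]
    by_cases hjt : (jt : ℕ) = t - 1
    · -- last column: use the Cayley relation
      have hjt1 : (jt : ℕ) + 1 = t := by have := jt.isLt; omega
      rw [hjt1]
      have h13 : ∀ xt : Fin t, companionMatrix t qp xt jt = -qp.coeff (xt : ℕ) := by
        intro xt
        show (if (jt : ℕ) = t - 1 then -qp.coeff (xt : ℕ)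
          else if (xt : ℕ) = (jt : ℕ) + 1 then 1 else 0) = _
        rw [if_pos hjt]
      rw [Finset.sum_congr rfl fun xt _ => by rw [h13 xt]]
      rw [hApow]
      rw [Matrix.neg_mulVec]
      have h14 : ((∑ j ∈ Finset.range t, qp.coeff j • A ^ j).mulVec (vlift je)) =
          ∑ j ∈ Finset.range t, qp.coeff j • ((A ^ j).mulVec (vlift je)) := by
        rw [sum_mulVec]
        exact Finset.sum_congr rfl fun j _ => Matrix.smul_mulVec _ _ _
      rw [Pi.neg_apply, h14]
      rw [Finset.sum_apply]
      rw [← Fin.sum_univ_eq_sum_range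
        (fun j => (qp.coeff j • ((A ^ j).mulVec (vlift je))) i) t]
      rw [← Finset.sum_neg_distrib]
      refine Finset.sum_congr rfl fun xt _ => ?_
      rw [Pi.smul_apply, smul_eq_mul]
      ring
    · -- other columns
      have hlt : (jt : ℕ) + 1 < t := by have := jt.isLt; omega
      have h15 : ∀ xt : Fin t, ((A ^ (xt : ℕ)).mulVec (vlift je)) i *
          companionMatrix t qp xt jt =
          if xt = (⟨(jt : ℕ) + 1, hlt⟩ : Fin t) then
            ((A ^ (xt : ℕ)).mulVec (vlift je)) i else 0 := by
        intro xt
        have h16 : companionMatrix t qp xt jt =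
            if (xt : ℕ) = (jt : ℕ) + 1 then 1 else 0 := by
          show (if (jt : ℕ) = t - 1 then -qp.coeff (xt : ℕ)
            else if (xt : ℕ) = (jt : ℕ) + 1 then 1 else 0) = _
          rw [if_neg hjt]
        rw [h16, mul_ite, mul_one, mul_zero]
        by_cases hx : (xt : ℕ) = (jt : ℕ) + 1
        · rw [if_pos hx, if_pos (Fin.ext_iff.mpr hx)]
        · rw [if_neg hx, if_neg (fun hc => hx (by rw [hc]))]
      rw [Finset.sum_congr rfl fun xt _ => h15 xt]
      rw [Finset.sum_ite_eq' Finset.univ (⟨(jt : ℕ) + 1, hlt⟩ : Fin t)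
        (fun xt => ((A ^ (xt : ℕ)).mulVec (vlift je)) i)]
      rw [if_pos (Finset.mem_univ _)]
  -- conclude
  have hu := (Matrix.isUnit_iff_isUnit_det V).mpr hdetV
  refine ⟨(hu.unit)⁻¹, ?_⟩
  have huv : (hu.unit : Matrix (Fin (t * e)) (Fin (t * e)) ℤ_[l]) = V := hu.unit_spec
  show (↑(hu.unit⁻¹) : Matrix (Fin (t * e)) (Fin (t * e)) ℤ_[l]) * A *
      (↑((hu.unit⁻¹)⁻¹) : Matrix (Fin (t * e)) (Fin (t * e)) ℤ_[l]) = Cmat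
  rw [inv_inv]
  have h18 : (↑(hu.unit⁻¹) : Matrix (Fin (t * e)) (Fin (t * e)) ℤ_[l]) * V = 1 := by
    have h19 := hu.unit.inv_mul
    rw [huv] at h19
    exact h19
  calc (↑(hu.unit⁻¹) : Matrix (Fin (t * e)) (Fin (t * e)) ℤ_[l]) * A * ↑hu.unit
      = ↑(hu.unit⁻¹) * (A * V) := by rw [Matrix.mul_assoc, huv]
    _ = ↑(hu.unit⁻¹) * (V * Cmat) := by rw [hAV]
    _ = ↑(hu.unit⁻¹) * V * Cmat := by rw [Matrix.mul_assoc]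
    _ = Cmat := by rw [h18, Matrix.one_mul]
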